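/- In the abstract relative-energy setting with the distance-weighted length constraint on ξ, there exists a constant C ∈ (0, ∞) depending only on c such that ∫_Ω ‖n − ξ‖² · ε‖a‖² dμ + ∫_Ω min{δ², 1} · ε‖a‖² dμ ≤ C·E (for instance C = 12 + 6/c works). -/

import Mathlib

open MeasureTheory

lemma keyineq (ε N B r t m c : ℝ) (hε : 0 < ε) (hN : 0 ≤ N) (hB : 0 ≤ B)
    (ht : |t| ≤ r * N) (hm0 : 0 ≤ m) (hm1 : m ≤ 1) (hc0 : 0 < c)
    (hr0 : 0 ≤ r) (hr : r ≤ 1 - c * m) :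
    ε * (N^2 * (1 + r^2) - 2*N*t) + m * (ε * N^2)
      ≤ (8 + 2/c) * (ε/2 * N^2 + B^2/2/ε - B*t) := by
  have hcm : 0 ≤ c * m := mul_nonneg hc0.le hm0
  have hr1 : r ≤ 1 := by linarith
  have habs := abs_le.mp ht
  set R := ε/2 * N^2 + B^2/2/ε - B*t with hRdef
  have hεR : ε * R = ε^2/2 * N^2 + B^2/2 - ε*(B*t) := by
    rw [hRdef]; field_simp
  have h2 : m * (ε * N^2) ≤ (2/c) * R := by
    rw [div_mul_eq_mul_div, le_div_iff₀ hc0]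
    have h2' : ε * (m * (ε * N^2) * c) ≤ ε * (2 * R) := by
      have : ε * (2 * R) = 2 * (ε * R) := by ring
      rw [this, hεR]
      nlinarith [mul_nonneg (mul_nonneg hε.le hB) (sub_nonneg.mpr habs.2),
        mul_nonneg hr0 (sq_nonneg (ε*N - B)),
        mul_nonneg (by linarith : (0:ℝ) ≤ 1 - r - c*m) (sq_nonneg (ε*N)),
        mul_nonneg (by linarith : (0:ℝ) ≤ 1 - r) (sq_nonneg B)]
    exact le_of_mul_le_mul_left h2' hε
  have h1 : ε * (N^2 * (1 + r^2) - 2*N*t) ≤ 8 * R := by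
    have h1' : ε * (ε * (N^2 * (1 + r^2) - 2*N*t)) ≤ ε * (8 * R) := by
      have : ε * (8 * R) = 8 * (ε * R) := by ring
      rw [this, hεR]
      rcases le_or_gt t 0 with htn | htp
      · nlinarith [mul_nonneg (mul_nonneg hε.le hB) (neg_nonneg.mpr htn),
          mul_nonneg (by positivity : (0:ℝ) ≤ 2*ε^2*N) (by linarith [habs.1] : 0 ≤ r*N + t),
          mul_nonneg (mul_nonneg (mul_nonneg (sub_nonneg.mpr hr1) (by linarith : (0:ℝ) ≤ r + 3)) (sq_nonneg N)) (sq_nonneg ε),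
          sq_nonneg B]
      · have hNt : t ≤ N := le_trans habs.2 (by nlinarith)
        nlinarith [sq_nonneg (B - ε*t),
          mul_nonneg (mul_nonneg (sq_nonneg ε) (sub_nonneg.mpr hNt)) (by linarith : (0:ℝ) ≤ N + 2*t),
          mul_nonneg (mul_nonneg (mul_nonneg (sub_nonneg.mpr hr1) (by linarith : (0:ℝ) ≤ 1 + r)) (sq_nonneg N)) (sq_nonneg ε)]
    exact le_of_mul_le_mul_left h1' hε
  calc ε * (N^2 * (1 + r^2) - 2*N*t) + m * (ε * N^2) ≤ 8 * R + (2/c)*R := add_le_add h1 h2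
    _ = (8 + 2/c) * R := by ring

lemma Rnonneg (ε N B r t : ℝ) (hε : 0 < ε) (hN : 0 ≤ N) (hB : 0 ≤ B)
    (ht : |t| ≤ r * N) (hr1 : r ≤ 1) :
    0 ≤ ε/2 * N^2 + B^2/2/ε - B*t := by
  have habs := abs_le.mp ht
  have h : 0 ≤ ε * (ε/2 * N^2 + B^2/2/ε - B*t) := by
    have : ε * (ε/2 * N^2 + B^2/2/ε - B*t) = ε^2/2*N^2 + B^2/2 - ε*(B*t) := by
      field_simp
    rw [this]
    nlinarith [mul_nonneg (mul_nonneg hε.le hB) (sub_nonneg.mpr habs.2),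
      mul_nonneg (mul_nonneg hε.le hB) (mul_nonneg (by linarith : (0:ℝ) ≤ 1 - r) hN),
      sq_nonneg (ε*N - B)]
  exact nonneg_of_mul_nonneg_right h hε

/-- In the abstract relative-energy setting with the
distance-weighted length constraint `‖ξ‖ ≤ 1 − c·min{δ², 1}` on `ξ`, there is a
constant `C` depending only on `c` (namely `C = 12 + 6/c`) with
`∫ ‖n − ξ‖²·ε‖a‖² dμ + ∫ min{δ², 1}·ε‖a‖² dμ ≤ C·E`. -/
theorem stmt5 {Ω : Type*} [MeasurableSpace Ω] (μ : Measure Ω)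
    (d : ℕ) (hd : 1 ≤ d) (ε : ℝ) (hε : 0 < ε)
    (u a ξ : Ω → EuclideanSpace ℝ (Fin d)) (w : Ω → ℝ)
    (hu : AEStronglyMeasurable u μ) (ha : AEStronglyMeasurable a μ)
    (hξ : AEStronglyMeasurable ξ μ) (hw : AEStronglyMeasurable w μ)
    (hw0 : ∀ᵐ x ∂μ, 0 ≤ w x) (hξ1 : ∀ᵐ x ∂μ, ‖ξ x‖ ≤ 1)
    (hu2 : Integrable (fun x => ‖u x‖ ^ 2) μ)
    (ha2 : Integrable (fun x => ‖a x‖ ^ 2) μ)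
    (hwi : Integrable w μ)
    (s : EuclideanSpace ℝ (Fin d)) (hs : ‖s‖ = 1)
    (n : Ω → EuclideanSpace ℝ (Fin d))
    (hn : ∀ x, (a x ≠ 0 → n x = ‖a x‖⁻¹ • a x) ∧ (a x = 0 → n x = s))
    (E : ℝ)
    (hE : E = ∫ x, (1 / 2 * ‖u x‖ ^ 2 + ε / 2 * ‖a x‖ ^ 2 + w x / ε
        - Real.sqrt (2 * w x) * (inner ℝ (ξ x) (a x) : ℝ)) ∂μ)
    (δ : Ω → ℝ) (hδm : Measurable δ) (hδ0 : ∀ x, 0 ≤ δ x)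
    (c : ℝ) (hc : c ∈ Set.Ioo (0 : ℝ) 1)
    (hξc : ∀ᵐ x ∂μ, ‖ξ x‖ ≤ 1 - c * min (δ x ^ 2) 1) :
    ∫ x, ‖n x - ξ x‖ ^ 2 * (ε * ‖a x‖ ^ 2) ∂μ
      + ∫ x, min (δ x ^ 2) 1 * (ε * ‖a x‖ ^ 2) ∂μ
    ≤ (12 + 6 / c) * E := by
  obtain ⟨hc0, hc1⟩ := hc
  set e : Ω → ℝ := fun x => 1 / 2 * ‖u x‖ ^ 2 + ε / 2 * ‖a x‖ ^ 2 + w x / ε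
        - Real.sqrt (2 * w x) * (inner ℝ (ξ x) (a x) : ℝ) with hedef
  set F1 : Ω → ℝ := fun x => ‖n x - ξ x‖ ^ 2 * (ε * ‖a x‖ ^ 2) with hF1def
  set F2 : Ω → ℝ := fun x => min (δ x ^ 2) 1 * (ε * ‖a x‖ ^ 2) with hF2def
  -- pointwise facts about n
  have hn1 : ∀ x, ‖n x‖ = 1 := fun x => by
    rcases eq_or_ne (a x) 0 with h | h
    · rw [(hn x).2 h, hs]
    · rw [(hn x).1 h, norm_smul, norm_inv, norm_norm,
        inv_mul_cancel₀ (norm_ne_zero_iff.2 h)]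
  have hnξ : ∀ x, ‖n x - ξ x‖ ^ 2 * ‖a x‖ ^ 2
      = ‖a x‖ ^ 2 * (1 + ‖ξ x‖ ^ 2) - 2 * (‖a x‖ * (inner ℝ (ξ x) (a x) : ℝ)) := by
    intro x
    have hexp : ‖n x - ξ x‖ ^ 2
        = ‖n x‖ ^ 2 - 2 * (inner ℝ (n x) (ξ x) : ℝ) + ‖ξ x‖ ^ 2 :=
      norm_sub_sq_real _ _
    rcases eq_or_ne (a x) 0 with h | h
    · simp [h]
    · have hN0 : ‖a x‖ ≠ 0 := norm_ne_zero_iff.2 h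
      have hinn : (inner ℝ (n x) (ξ x) : ℝ) = ‖a x‖⁻¹ * (inner ℝ (ξ x) (a x) : ℝ) := by
        rw [(hn x).1 h, real_inner_smul_left, real_inner_comm]
      rw [hexp, hinn, hn1 x]
      field_simp
      ring
  -- measurability pieces
  have hinner : AEStronglyMeasurable (fun x => (inner ℝ (ξ x) (a x) : ℝ)) μ := hξ.inner ha
  have hsqm : AEStronglyMeasurable (fun x => Real.sqrt (2 * w x)) μ :=
    Real.continuous_sqrt.comp_aestronglyMeasurable (hw.const_mul 2)
  have hnormam : AEStronglyMeasurable (fun x => ‖a x‖ ^ 2) μ := ha2.aestronglyMeasurable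
  -- integrability of e
  have hlast : Integrable (fun x => Real.sqrt (2 * w x) * (inner ℝ (ξ x) (a x) : ℝ)) μ := by
    refine Integrable.mono' (hwi.add (ha2.div_const 2)) (hsqm.mul hinner) ?_
    filter_upwards [hw0, hξ1] with x hwx hξx
    have hB2 : Real.sqrt (2 * w x) ^ 2 = 2 * w x := Real.sq_sqrt (by linarith)
    have hB0 : 0 ≤ Real.sqrt (2 * w x) := Real.sqrt_nonneg _
    have h1 : |(inner ℝ (ξ x) (a x) : ℝ)| ≤ ‖ξ x‖ * ‖a x‖ := abs_real_inner_le_norm _ _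
    have h2 : ‖ξ x‖ * ‖a x‖ ≤ ‖a x‖ :=
      mul_le_of_le_one_left (norm_nonneg _) hξx
    rw [Real.norm_eq_abs, abs_mul, abs_of_nonneg hB0]
    have h3 : Real.sqrt (2 * w x) * |(inner ℝ (ξ x) (a x) : ℝ)|
        ≤ Real.sqrt (2 * w x) * ‖a x‖ :=
      mul_le_mul_of_nonneg_left (le_trans h1 h2) hB0
    simp only [Pi.add_apply]
    nlinarith [sq_nonneg (Real.sqrt (2 * w x) - ‖a x‖)]
  have hei : Integrable e μ := by
    rw [hedef]
    exact (((hu2.const_mul (1/2)).add (ha2.const_mul (ε/2))).add (hwi.div_const ε)).sub hlast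
  -- integrability of F1
  have hG1m : AEStronglyMeasurable
      (fun x => ε * (‖a x‖ ^ 2 * (1 + ‖ξ x‖ ^ 2) - 2 * (‖a x‖ * (inner ℝ (ξ x) (a x) : ℝ)))) μ := by
    apply AEStronglyMeasurable.const_mul
    have hξsq : AEStronglyMeasurable (fun x => ‖ξ x‖ ^ 2) μ :=
      (hξ.norm.mul hξ.norm).congr (Filter.Eventually.of_forall fun x => (pow_two ‖ξ x‖).symm)
    have hξ2 : AEStronglyMeasurable (fun x => 1 + ‖ξ x‖ ^ 2) μ := hξsq.const_add 1
    exact (hnormam.mul hξ2).sub ((ha.norm.mul hinner).const_mul 2)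
  have hF1m : AEStronglyMeasurable F1 μ := by
    refine hG1m.congr (Filter.Eventually.of_forall fun x => ?_)
    rw [hF1def]
    simp only
    rw [show ‖n x - ξ x‖ ^ 2 * (ε * ‖a x‖ ^ 2) = ε * (‖n x - ξ x‖ ^ 2 * ‖a x‖ ^ 2) by ring,
      hnξ x]
  have hF1i : Integrable F1 μ := by
    refine Integrable.mono' (ha2.const_mul (4 * ε)) hF1m ?_
    filter_upwards [hξ1] with x hξx
    have hd : ‖n x - ξ x‖ ≤ 2 := by
      calc ‖n x - ξ x‖ ≤ ‖n x‖ + ‖ξ x‖ := norm_sub_le _ _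
        _ ≤ 2 := by rw [hn1 x]; linarith
    have h0 : (0:ℝ) ≤ ‖n x - ξ x‖ ^ 2 * (ε * ‖a x‖ ^ 2) := by positivity
    rw [hF1def]
    simp only
    rw [Real.norm_eq_abs, abs_of_nonneg h0]
    have h4 : ‖n x - ξ x‖ ^ 2 ≤ 4 := by nlinarith [norm_nonneg (n x - ξ x)]
    have h5 : (0:ℝ) ≤ ε * ‖a x‖ ^ 2 := by positivity
    calc ‖n x - ξ x‖ ^ 2 * (ε * ‖a x‖ ^ 2) ≤ 4 * (ε * ‖a x‖ ^ 2) :=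
          mul_le_mul_of_nonneg_right h4 h5
      _ = 4 * ε * ‖a x‖ ^ 2 := by ring
  -- integrability of F2
  have hminm : Measurable (fun x => min (δ x ^ 2) 1) := (hδm.pow_const 2).min measurable_const
  have hF2m : AEStronglyMeasurable F2 μ :=
    hminm.aestronglyMeasurable.mul (hnormam.const_mul ε)
  have hF2i : Integrable F2 μ := by
    refine Integrable.mono' (ha2.const_mul ε) hF2m ?_
    refine Filter.Eventually.of_forall fun x => ?_
    have hm0 : 0 ≤ min (δ x ^ 2) 1 := le_min (sq_nonneg _) zero_le_one
    have hm1 : min (δ x ^ 2) 1 ≤ 1 := min_le_right _ _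
    have h0 : (0:ℝ) ≤ min (δ x ^ 2) 1 * (ε * ‖a x‖ ^ 2) := by positivity
    rw [hF2def]
    simp only
    rw [Real.norm_eq_abs, abs_of_nonneg h0]
    have h5 : (0:ℝ) ≤ ε * ‖a x‖ ^ 2 := by positivity
    calc min (δ x ^ 2) 1 * (ε * ‖a x‖ ^ 2) ≤ 1 * (ε * ‖a x‖ ^ 2) :=
          mul_le_mul_of_nonneg_right hm1 h5
      _ = ε * ‖a x‖ ^ 2 := by ring
  -- e nonneg a.e.
  have he0 : ∀ᵐ x ∂μ, 0 ≤ e x := by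
    filter_upwards [hw0, hξ1] with x hwx hξx
    have hB2 : Real.sqrt (2 * w x) ^ 2 = 2 * w x := Real.sq_sqrt (by linarith)
    have hR := Rnonneg ε (‖a x‖) (Real.sqrt (2 * w x)) (‖ξ x‖)
      (inner ℝ (ξ x) (a x)) hε (norm_nonneg _) (Real.sqrt_nonneg _)
      (abs_real_inner_le_norm _ _) hξx
    have hwB : w x / ε = Real.sqrt (2 * w x) ^ 2 / 2 / ε := by rw [hB2]; ring
    simp only [hedef]
    linarith [sq_nonneg ‖u x‖, hR, hwB]
  -- key pointwise estimate
  have hkey : ∀ᵐ x ∂μ, F1 x + F2 x ≤ (8 + 2/c) * e x := by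
    filter_upwards [hw0, hξc] with x hwx hξx
    have hB2 : Real.sqrt (2 * w x) ^ 2 = 2 * w x := Real.sq_sqrt (by linarith)
    have hm0 : 0 ≤ min (δ x ^ 2) 1 := le_min (sq_nonneg _) zero_le_one
    have hm1 : min (δ x ^ 2) 1 ≤ 1 := min_le_right _ _
    have hK := keyineq ε (‖a x‖) (Real.sqrt (2 * w x)) (‖ξ x‖)
      (inner ℝ (ξ x) (a x)) (min (δ x ^ 2) 1) c hε (norm_nonneg _) (Real.sqrt_nonneg _)
      (abs_real_inner_le_norm _ _) hm0 hm1 hc0 (norm_nonneg _) hξx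
    have h8 : (0:ℝ) ≤ 8 + 2/c := by positivity
    have hF1x : ‖n x - ξ x‖ ^ 2 * (ε * ‖a x‖ ^ 2)
        = ε * (‖a x‖ ^ 2 * (1 + ‖ξ x‖ ^ 2) - 2 * ‖a x‖ * (inner ℝ (ξ x) (a x) : ℝ)) := by
      rw [show ‖n x - ξ x‖ ^ 2 * (ε * ‖a x‖ ^ 2)
          = ε * (‖n x - ξ x‖ ^ 2 * ‖a x‖ ^ 2) by ring, hnξ x]
      ring
    have hwB : w x / ε = Real.sqrt (2 * w x) ^ 2 / 2 / ε := by rw [hB2]; ring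
    have hRe : ε/2 * ‖a x‖ ^ 2 + Real.sqrt (2 * w x) ^ 2 / 2 / ε
          - Real.sqrt (2 * w x) * (inner ℝ (ξ x) (a x) : ℝ)
        ≤ 1 / 2 * ‖u x‖ ^ 2 + ε / 2 * ‖a x‖ ^ 2 + w x / ε
          - Real.sqrt (2 * w x) * (inner ℝ (ξ x) (a x) : ℝ) := by
      linarith [sq_nonneg ‖u x‖, hwB]
    have hmono := mul_le_mul_of_nonneg_left hRe h8
    simp only [hF1def, hF2def, hedef]
    linarith [hK, hmono, hF1x]
  -- conclude
  have hE0 : 0 ≤ E := by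
    rw [hE]
    exact integral_nonneg_of_ae he0
  have hEe : (∫ x, e x ∂μ) = E := by rw [hE]
  calc (∫ x, F1 x ∂μ) + ∫ x, F2 x ∂μ
      = ∫ x, (F1 x + F2 x) ∂μ := (integral_add hF1i hF2i).symm
    _ ≤ ∫ x, (8 + 2/c) * e x ∂μ := integral_mono_ae (hF1i.add hF2i) (hei.const_mul _) hkey
    _ = (8 + 2/c) * E := by rw [integral_const_mul, hEe]
    _ ≤ (12 + 6/c) * E := by
        apply mul_le_mul_of_nonneg_right _ hE0
        have : (0:ℝ) ≤ 4/c := by positivity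
        have h46 : 6/c - 2/c = 4/c := by ring
        linarith
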